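/- arXiv:1504.08264 — 4 statements merged into one kernel-verified Lean document; each statement's English description precedes it below -/
import Mathlib

section
/- Let c ∈ (-1,1) and let G1, G2 be independent standard Gaussian random variables; set X = G1 and Y = c·G1 + √(1-c²)·G2. Then for every λ = (λ1,λ2,λ3) ∈ ℝ³ with λ ∉ D_c, the expectation E[exp(λ1·X² + λ2·Y² + λ3·X·Y)] is infinite (the integral of exp(λ1x² + λ2y² + λ3xy) against the law of (X,Y) equals +∞). -/
open MeasureTheory ProbabilityTheory Real
open scoped ENNReal NNReal

noncomputable section

/-- The domain `D_c` of the log-moment generating function. -/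
def Dc (c l1 l2 l3 : ℝ) : Prop :=
  max l1 l2 < 1 / (2 * (1 - c ^ 2)) ∧
    (l3 * (1 - c ^ 2) + c) ^ 2 < (1 - 2 * l1 * (1 - c ^ 2)) * (1 - 2 * l2 * (1 - c ^ 2))

lemma aux_lintegral_exp_linear_top (b k : ℝ) :
    ∫⁻ v : ℝ, ENNReal.ofReal (Real.exp (b * v + k)) = ⊤ := by
  refine top_unique ?_
  obtain ⟨S, hSm, hSv, hSpos⟩ : ∃ S : Set ℝ, MeasurableSet S ∧ volume S = ⊤ ∧
      ∀ v ∈ S, 0 ≤ b * v := by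
    rcases le_or_gt 0 b with hb | hb
    · exact ⟨Set.Ici 0, measurableSet_Ici, Real.volume_Ici, fun v hv => mul_nonneg hb hv⟩
    · exact ⟨Set.Iic 0, measurableSet_Iic, Real.volume_Iic,
        fun v hv => by simp only [Set.mem_Iic] at hv; nlinarith⟩
  calc (⊤ : ℝ≥0∞) = ENNReal.ofReal (Real.exp k) * volume S := by
        rw [hSv, ENNReal.mul_top (by simp [Real.exp_pos])]
    _ = ∫⁻ _ in S, ENNReal.ofReal (Real.exp k) := (setLIntegral_const S _).symm
    _ ≤ ∫⁻ v in S, ENNReal.ofReal (Real.exp (b * v + k)) := by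
        refine setLIntegral_mono (by fun_prop) fun v hv => ?_
        exact ENNReal.ofReal_le_ofReal (Real.exp_le_exp.mpr (by nlinarith [hSpos v hv]))
    _ ≤ ∫⁻ v, ENNReal.ofReal (Real.exp (b * v + k)) := setLIntegral_le_lintegral _ _

lemma aux_key (A B C K : ℝ) (h : C ≤ 0 ∨ 4 * A * C ≤ B ^ 2) :
    ∫⁻ u : ℝ, ∫⁻ v : ℝ,
      ENNReal.ofReal (Real.exp (-(A * u ^ 2 + B * (u * v) + C * v ^ 2) / 2 - K)) = ⊤ := by
  rcases le_or_gt C 0 with hC | hC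
  · have hinner : ∀ u : ℝ, (∫⁻ v : ℝ,
        ENNReal.ofReal (Real.exp (-(A * u ^ 2 + B * (u * v) + C * v ^ 2) / 2 - K))) = ⊤ := by
      intro u
      refine top_unique ?_
      rw [← aux_lintegral_exp_linear_top (-(B * u) / 2) (-(A * u ^ 2) / 2 - K)]
      refine lintegral_mono fun v => ENNReal.ofReal_le_ofReal (Real.exp_le_exp.mpr ?_)
      nlinarith [mul_nonpos_of_nonpos_of_nonneg hC (sq_nonneg v)]
    simp only [hinner, lintegral_const, Real.volume_univ, ENNReal.top_mul_top]
  · have hBC : 4 * A * C ≤ B ^ 2 := by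
      rcases h with h | h
      · linarith
      · exact h
    have hinner : ∀ u : ℝ, ENNReal.ofReal (2 * Real.exp (-C / 2 - K)) ≤
        ∫⁻ v : ℝ, ENNReal.ofReal (Real.exp (-(A * u ^ 2 + B * (u * v) + C * v ^ 2) / 2 - K)) := by
      intro u
      set m : ℝ := B * u / (2 * C) with hm
      have hCne : C ≠ 0 := ne_of_gt hC
      calc ENNReal.ofReal (2 * Real.exp (-C / 2 - K))
          = ∫⁻ _ in Set.Icc (-m - 1) (-m + 1), ENNReal.ofReal (Real.exp (-C / 2 - K)) := by
            rw [setLIntegral_const, Real.volume_Icc,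
              show (-m + 1) - (-m - 1) = (2:ℝ) by ring,
              ← ENNReal.ofReal_mul (Real.exp_nonneg _), mul_comm]
        _ ≤ ∫⁻ v in Set.Icc (-m - 1) (-m + 1),
              ENNReal.ofReal (Real.exp (-(A * u ^ 2 + B * (u * v) + C * v ^ 2) / 2 - K)) := by
            refine setLIntegral_mono (by fun_prop) fun v hv => ?_
            refine ENNReal.ofReal_le_ofReal (Real.exp_le_exp.mpr ?_)
            have h1 : (v + m) ^ 2 ≤ 1 := by
              obtain ⟨hv1, hv2⟩ := hv; nlinarith
            have hX : A * u ^ 2 + B * (u * v) + C * v ^ 2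
                = C * (v + m) ^ 2 + (A - B ^ 2 / (4 * C)) * u ^ 2 := by
              rw [hm]; field_simp; ring
            have hδ : A - B ^ 2 / (4 * C) ≤ 0 := by
              rw [sub_nonpos, le_div_iff₀ (by positivity)]; linarith
            rw [hX]
            nlinarith [mul_nonpos_of_nonpos_of_nonneg hδ (sq_nonneg u),
              mul_le_mul_of_nonneg_left h1 hC.le]
        _ ≤ ∫⁻ v, ENNReal.ofReal (Real.exp (-(A * u ^ 2 + B * (u * v) + C * v ^ 2) / 2 - K)) :=
            setLIntegral_le_lintegral _ _
    refine top_unique ?_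
    calc (⊤ : ℝ≥0∞) = ENNReal.ofReal (2 * Real.exp (-C / 2 - K)) * volume (Set.univ : Set ℝ) := by
          rw [Real.volume_univ, ENNReal.mul_top
            (by simp [ENNReal.ofReal_eq_zero]; positivity)]
      _ = ∫⁻ _ : ℝ, ENNReal.ofReal (2 * Real.exp (-C / 2 - K)) := (lintegral_const _).symm
      _ ≤ _ := lintegral_mono hinner

/-- For a centered bivariate Gaussian vector `(X, Y)` with unit variances and correlation
`c ∈ (-1,1)`, built as `X = G₁`, `Y = c G₁ + √(1-c²) G₂` from independent standard Gaussians,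
and any `λ = (λ₁, λ₂, λ₃) ∉ D_c`, the exponential moment
`E[exp(λ₁ X² + λ₂ Y² + λ₃ X Y)]` is infinite. -/
theorem exp_moment_bivariate_gaussian_eq_top_of_not_mem
    {Ω : Type*} [MeasurableSpace Ω] (P : Measure Ω) [IsProbabilityMeasure P]
    (G1 G2 : Ω → ℝ) (hmG1 : Measurable G1) (hmG2 : Measurable G2)
    (hG1 : Measure.map G1 P = gaussianReal 0 1)
    (hG2 : Measure.map G2 P = gaussianReal 0 1)
    (hindep : IndepFun G1 G2 P)
    (c : ℝ) (hc : c ∈ Set.Ioo (-1 : ℝ) 1)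
    (X Y : Ω → ℝ) (hX : X = G1)
    (hY : Y = fun ω => c * G1 ω + Real.sqrt (1 - c ^ 2) * G2 ω)
    (l1 l2 l3 : ℝ) (hl : ¬ Dc c l1 l2 l3) :
    ∫⁻ ω, ENNReal.ofReal
        (Real.exp (l1 * (X ω) ^ 2 + l2 * (Y ω) ^ 2 + l3 * (X ω * Y ω))) ∂P = ⊤ := by
  simp only [hX, hY]
  clear hX hY
  obtain ⟨hc1, hc2⟩ := hc
  have hw : (0:ℝ) < 1 - c ^ 2 := by nlinarith
  set s : ℝ := Real.sqrt (1 - c ^ 2) with hs_def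
  have hs2 : s ^ 2 = 1 - c ^ 2 := Real.sq_sqrt hw.le
  set g : ℝ × ℝ → ℝ≥0∞ := fun p => ENNReal.ofReal
    (Real.exp (l1 * p.1 ^ 2 + l2 * (c * p.1 + s * p.2) ^ 2 + l3 * (p.1 * (c * p.1 + s * p.2))))
    with hg_def
  have hgm : Measurable g := by unfold g; fun_prop
  have hmap : P.map (fun ω => (G1 ω, G2 ω)) = (gaussianReal 0 1).prod (gaussianReal 0 1) := by
    have h := (ProbabilityTheory.indepFun_iff_map_prod_eq_prod_map_map
      hmG1.aemeasurable hmG2.aemeasurable).mp hindep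
    rw [hG1, hG2] at h
    exact h
  have hstep1 : ∫⁻ ω, ENNReal.ofReal
      (Real.exp (l1 * (G1 ω) ^ 2 + l2 * (c * G1 ω + s * G2 ω) ^ 2
        + l3 * (G1 ω * (c * G1 ω + s * G2 ω)))) ∂P
      = ∫⁻ p, g p ∂((gaussianReal 0 1).prod (gaussianReal 0 1)) := by
    rw [← hmap, lintegral_map hgm (hmG1.prodMk hmG2)]
  rw [hstep1, lintegral_prod _ hgm.aemeasurable]
  have hg1 : gaussianReal 0 1 = volume.withDensity (gaussianPDF 0 1) :=
    gaussianReal_of_var_ne_zero 0 one_ne_zero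
  have hinner_eq : ∀ u : ℝ, (∫⁻ v, g (u, v) ∂(gaussianReal 0 1))
      = ∫⁻ v, gaussianPDF 0 1 v * g (u, v) ∂volume := by
    intro u
    rw [hg1, lintegral_withDensity_eq_lintegral_mul _ (measurable_gaussianPDF 0 1)
      (show Measurable fun v => g (u, v) from hgm.comp measurable_prodMk_left)]
    rfl
  rw [lintegral_congr hinner_eq, hg1,
    lintegral_withDensity_eq_lintegral_mul _ (measurable_gaussianPDF 0 1)
      (show Measurable fun u : ℝ => ∫⁻ v, gaussianPDF 0 1 v * g (u, v) ∂volume from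
        Measurable.lintegral_prod_right'
          (show Measurable fun p : ℝ × ℝ => gaussianPDF 0 1 p.2 * g p from
            ((measurable_gaussianPDF 0 1).comp measurable_snd).mul hgm))]
  -- pointwise rewriting of the integrand
  set A : ℝ := 1 - 2 * (l1 + l2 * c ^ 2 + l3 * c) with hA
  set B : ℝ := -2 * s * (2 * l2 * c + l3) with hB
  set C : ℝ := 1 - 2 * l2 * s ^ 2 with hC
  set K : ℝ := 2 * Real.log (Real.sqrt (2 * Real.pi)) with hK
  have hπ : (0:ℝ) < Real.sqrt (2 * Real.pi) := Real.sqrt_pos.mpr (by positivity)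
  have hpoint : ∀ u v : ℝ, gaussianPDF 0 1 u * (gaussianPDF 0 1 v * g (u, v))
      = ENNReal.ofReal (Real.exp (-(A * u ^ 2 + B * (u * v) + C * v ^ 2) / 2 - K)) := by
    intro u v
    simp only [hg_def, gaussianPDF, gaussianPDFReal, NNReal.coe_one, mul_one, sub_zero]
    rw [← ENNReal.ofReal_mul (by positivity), ← ENNReal.ofReal_mul (by positivity)]
    congr 1
    rw [show (Real.sqrt (2 * Real.pi))⁻¹ = Real.exp (-Real.log (Real.sqrt (2 * Real.pi))) by
      rw [Real.exp_neg, Real.exp_log hπ]]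
    rw [← Real.exp_add, ← Real.exp_add, ← Real.exp_add, ← Real.exp_add]
    congr 1
    simp only [hA, hB, hC, hK]
    have : s * s = s ^ 2 := by ring
    nlinarith [hs2]
  have hstep2 : (fun u => gaussianPDF 0 1 u * ∫⁻ v, gaussianPDF 0 1 v * g (u, v) ∂volume)
      = fun u => ∫⁻ v : ℝ,
          ENNReal.ofReal (Real.exp (-(A * u ^ 2 + B * (u * v) + C * v ^ 2) / 2 - K)) := by
    funext u
    rw [← lintegral_const_mul _ (show Measurable fun v => gaussianPDF 0 1 v * g (u, v) from
      ((measurable_gaussianPDF 0 1)).mul (hgm.comp measurable_prodMk_left))]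
    exact lintegral_congr fun v => by rw [← hpoint u v]
  have hdisj : C ≤ 0 ∨ 4 * A * C ≤ B ^ 2 := by
    by_contra hcon
    push_neg at hcon
    obtain ⟨hC0, hdet⟩ := hcon
    apply hl
    have hβ2 : B ^ 2 = 4 * (1 - c ^ 2) * (2 * l2 * c + l3) ^ 2 := by
      rw [hB]; linear_combination (4 * (2 * l2 * c + l3) ^ 2) * hs2
    rw [hβ2, hA, hC, hs2] at hdet
    rw [hC, hs2] at hC0
    have hdiff : (0:ℝ) < 4 * (1 - 2 * (l1 + l2 * c ^ 2 + l3 * c)) * (1 - 2 * l2 * (1 - c ^ 2))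
        - 4 * (1 - c ^ 2) * (2 * l2 * c + l3) ^ 2 := by linarith
    have hdet' : (l3 * (1 - c ^ 2) + c) ^ 2
        < (1 - 2 * l1 * (1 - c ^ 2)) * (1 - 2 * l2 * (1 - c ^ 2)) := by
      nlinarith [mul_pos hw hdiff]
    have ht1 : (0:ℝ) < 1 - 2 * l1 * (1 - c ^ 2) := by
      by_contra ht
      push_neg at ht
      nlinarith [sq_nonneg (l3 * (1 - c ^ 2) + c)]
    refine ⟨max_lt ?_ ?_, hdet'⟩
    · rw [lt_div_iff₀ (by positivity)]; linarith
    · rw [lt_div_iff₀ (by positivity)]; linarith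
  show ∫⁻ u, (gaussianPDF 0 1 * fun u => ∫⁻ v, gaussianPDF 0 1 v * g (u, v) ∂volume) u = ⊤
  simp only [Pi.mul_apply]
  rw [lintegral_congr fun u => congrFun hstep2 u]
  exact aux_key A B C K hdisj
end
end

section
/- Let c ∈ (-1,1) and let x = (x1,x2,x3) ∈ ℝ³ satisfy x1 > 0, x2 > 0 and x1·x2 > x3². Then the Legendre transform of P_c at x is given by the explicit formula sup_{λ ∈ D_c} ( λ1·x1 + λ2·x2 + λ3·x3 - P_c(λ) ) = log( √(1-c²) / √(x1·x2 - x3²) ) - 1 + (x1 + x2 - 2c·x3)/(2(1-c²)) = P*_c(x). -/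
open MeasureTheory Real

noncomputable section

/-- The function `P_c` on its domain `D_c`. -/
def Pc (c l1 l2 l3 : ℝ) : ℝ :=
  -(1 / 2) * Real.log
    (((1 - 2 * l1 * (1 - c ^ 2)) * (1 - 2 * l2 * (1 - c ^ 2)) -
        (l3 * (1 - c ^ 2) + c) ^ 2) / (1 - c ^ 2))

set_option maxHeartbeats 1000000 in
lemma upper_bound (c x1 x2 x3 l1 l2 l3 : ℝ) (hc1 : -1 < c) (hc2 : c < 1)
    (hx1 : 0 < x1) (hx2 : 0 < x2) (hx3 : x3 ^ 2 < x1 * x2) (hD : Dc c l1 l2 l3) :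
    l1 * x1 + l2 * x2 + l3 * x3 - Pc c l1 l2 l3 ≤
      Real.log (Real.sqrt (1 - c ^ 2) / Real.sqrt (x1 * x2 - x3 ^ 2)) - 1
        + (x1 + x2 - 2 * c * x3) / (2 * (1 - c ^ 2)) := by
  obtain ⟨hmax, hdet⟩ := hD
  have hs : (0:ℝ) < 1 - c ^ 2 := by nlinarith
  have hm : (0:ℝ) < x1 * x2 - x3 ^ 2 := by linarith
  have hl1 : l1 < 1 / (2 * (1 - c ^ 2)) := lt_of_le_of_lt (le_max_left l1 l2) hmax
  have hl2 : l2 < 1 / (2 * (1 - c ^ 2)) := lt_of_le_of_lt (le_max_right l1 l2) hmax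
  have ha : 0 < 1 - 2 * l1 * (1 - c ^ 2) := by
    have := (lt_div_iff₀ (by positivity : (0:ℝ) < 2 * (1 - c ^ 2))).mp hl1
    nlinarith
  have hb : 0 < 1 - 2 * l2 * (1 - c ^ 2) := by
    have := (lt_div_iff₀ (by positivity : (0:ℝ) < 2 * (1 - c ^ 2))).mp hl2
    nlinarith
  simp only [Pc]
  set s : ℝ := 1 - c ^ 2 with hsdef
  set a : ℝ := 1 - 2 * l1 * s with hadef
  set b : ℝ := 1 - 2 * l2 * s with hbdef
  set d : ℝ := l3 * s + c with hddef
  set m : ℝ := x1 * x2 - x3 ^ 2 with hmdef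
  have hΔ : 0 < a * b - d ^ 2 := by linarith
  set p : ℝ := Real.sqrt (a * b - d ^ 2) with hpdef
  set q : ℝ := Real.sqrt m with hqdef
  set u : ℝ := Real.sqrt (a * x1) with hudef
  set v : ℝ := Real.sqrt (b * x2) with hvdef
  have hp : 0 < p := Real.sqrt_pos.mpr hΔ
  have hq : 0 < q := Real.sqrt_pos.mpr hm
  have hp2 : p ^ 2 = a * b - d ^ 2 := Real.sq_sqrt hΔ.le
  have hq2 : q ^ 2 = m := Real.sq_sqrt hm.le
  have hu2 : u ^ 2 = a * x1 := Real.sq_sqrt (by positivity)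
  have hv2 : v ^ 2 = b * x2 := Real.sq_sqrt (by positivity)
  have hab : a * b = d ^ 2 + p ^ 2 := by rw [hp2]; ring
  have hx12 : x1 * x2 = x3 ^ 2 + q ^ 2 := by rw [hq2, hmdef]; ring
  have huv2 : (u * v) ^ 2 = a * b * (x1 * x2) := by rw [mul_pow, hu2, hv2]; ring
  have hsq : (d * x3 + p * q) ^ 2 ≤ (u * v) ^ 2 := by
    rw [huv2, hab, hx12]; nlinarith [sq_nonneg (d * q - x3 * p)]
  have huv : d * x3 + p * q ≤ u * v := by
    calc d * x3 + p * q ≤ |d * x3 + p * q| := le_abs_self _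
      _ = Real.sqrt ((d * x3 + p * q) ^ 2) := (Real.sqrt_sq_eq_abs _).symm
      _ ≤ Real.sqrt ((u * v) ^ 2) := Real.sqrt_le_sqrt hsq
      _ = u * v := Real.sqrt_sq (by positivity)
  have hT : 2 * (p * q) ≤ a * x1 + b * x2 - 2 * (d * x3) := by
    have h4 := two_mul_le_add_sq u v
    linarith
  have hkey : Real.log p + Real.log q - Real.log s ≤
      (a * x1 + b * x2 - 2 * (d * x3)) / (2 * s) - 1 := by
    have h1 : Real.log (p * q / s) ≤ p * q / s - 1 :=
      Real.log_le_sub_one_of_pos (by positivity)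
    have h2 : Real.log (p * q / s) = Real.log p + Real.log q - Real.log s := by
      rw [Real.log_div (by positivity) hs.ne', Real.log_mul hp.ne' hq.ne']
    have h3 : p * q / s ≤ (a * x1 + b * x2 - 2 * (d * x3)) / (2 * s) := by
      have e : p * q / s = 2 * (p * q) / (2 * s) :=
        (mul_div_mul_left _ _ two_ne_zero).symm
      rw [e]
      exact (div_le_div_iff_of_pos_right (by positivity)).mpr hT
    linarith
  have hlogΔ : Real.log ((a * b - d ^ 2) / s) = 2 * Real.log p - Real.log s := by
    rw [Real.log_div hΔ.ne' hs.ne', ← hp2, Real.log_pow]; push_cast; ring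
  have hlogm : Real.log m = 2 * Real.log q := by
    rw [← hq2, Real.log_pow]; push_cast; ring
  have hlogRHS : Real.log (Real.sqrt s / Real.sqrt m) =
      Real.log s / 2 - Real.log m / 2 := by
    rw [Real.log_div (by positivity) (by positivity), Real.log_sqrt hs.le,
      Real.log_sqrt hm.le]
  have hlin : l1 * x1 + l2 * x2 + l3 * x3 =
      (x1 + x2 - 2 * c * x3) / (2 * s) - (a * x1 + b * x2 - 2 * (d * x3)) / (2 * s) := by
    rw [hadef, hbdef, hddef]; field_simp; ring
  rw [hlogΔ, hlogRHS, hlin]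
  linarith [hkey, hlogm]

lemma attain_mem (c x1 x2 x3 : ℝ) (hc1 : -1 < c) (hc2 : c < 1)
    (hx1 : 0 < x1) (hx2 : 0 < x2) (hx3 : x3 ^ 2 < x1 * x2) :
    Dc c ((1 - x2 * (1 - c ^ 2) / (x1 * x2 - x3 ^ 2)) / (2 * (1 - c ^ 2)))
      ((1 - x1 * (1 - c ^ 2) / (x1 * x2 - x3 ^ 2)) / (2 * (1 - c ^ 2)))
      (x3 / (x1 * x2 - x3 ^ 2) - c / (1 - c ^ 2)) := by
  have hs : (0:ℝ) < 1 - c ^ 2 := by nlinarith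
  have hm : (0:ℝ) < x1 * x2 - x3 ^ 2 := by linarith
  constructor
  · apply max_lt
    · have hfrac : 0 < x2 * (1 - c ^ 2) / (x1 * x2 - x3 ^ 2) := by positivity
      exact (div_lt_div_iff_of_pos_right (by positivity)).mpr (by linarith)
    · have hfrac : 0 < x1 * (1 - c ^ 2) / (x1 * x2 - x3 ^ 2) := by positivity
      exact (div_lt_div_iff_of_pos_right (by positivity)).mpr (by linarith)
  · have e1 : 1 - 2 * ((1 - x2 * (1 - c ^ 2) / (x1 * x2 - x3 ^ 2)) / (2 * (1 - c ^ 2)))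
        * (1 - c ^ 2) = x2 * (1 - c ^ 2) / (x1 * x2 - x3 ^ 2) := by
      field_simp; ring
    have e2 : 1 - 2 * ((1 - x1 * (1 - c ^ 2) / (x1 * x2 - x3 ^ 2)) / (2 * (1 - c ^ 2)))
        * (1 - c ^ 2) = x1 * (1 - c ^ 2) / (x1 * x2 - x3 ^ 2) := by
      field_simp; ring
    have e3 : (x3 / (x1 * x2 - x3 ^ 2) - c / (1 - c ^ 2)) * (1 - c ^ 2) + c
        = x3 * (1 - c ^ 2) / (x1 * x2 - x3 ^ 2) := by
      field_simp; ring
    rw [e1, e2, e3]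
    have key : (x2 * (1 - c ^ 2) / (x1 * x2 - x3 ^ 2)) * (x1 * (1 - c ^ 2) / (x1 * x2 - x3 ^ 2))
        - (x3 * (1 - c ^ 2) / (x1 * x2 - x3 ^ 2)) ^ 2
        = (x1 * x2 - x3 ^ 2) * (1 - c ^ 2) ^ 2 / (x1 * x2 - x3 ^ 2) ^ 2 := by
      field_simp
    have hpos : 0 < (x1 * x2 - x3 ^ 2) * (1 - c ^ 2) ^ 2 / (x1 * x2 - x3 ^ 2) ^ 2 := by
      positivity
    linarith

lemma attain_value (c x1 x2 x3 : ℝ) (hc1 : -1 < c) (hc2 : c < 1)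
    (hx1 : 0 < x1) (hx2 : 0 < x2) (hx3 : x3 ^ 2 < x1 * x2) :
    ((1 - x2 * (1 - c ^ 2) / (x1 * x2 - x3 ^ 2)) / (2 * (1 - c ^ 2))) * x1
      + ((1 - x1 * (1 - c ^ 2) / (x1 * x2 - x3 ^ 2)) / (2 * (1 - c ^ 2))) * x2
      + (x3 / (x1 * x2 - x3 ^ 2) - c / (1 - c ^ 2)) * x3
      - Pc c ((1 - x2 * (1 - c ^ 2) / (x1 * x2 - x3 ^ 2)) / (2 * (1 - c ^ 2)))
          ((1 - x1 * (1 - c ^ 2) / (x1 * x2 - x3 ^ 2)) / (2 * (1 - c ^ 2)))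
          (x3 / (x1 * x2 - x3 ^ 2) - c / (1 - c ^ 2))
      = Real.log (Real.sqrt (1 - c ^ 2) / Real.sqrt (x1 * x2 - x3 ^ 2)) - 1
        + (x1 + x2 - 2 * c * x3) / (2 * (1 - c ^ 2)) := by
  have hs : (0:ℝ) < 1 - c ^ 2 := by nlinarith
  have hm : (0:ℝ) < x1 * x2 - x3 ^ 2 := by linarith
  have harg : ((1 - 2 * ((1 - x2 * (1 - c ^ 2) / (x1 * x2 - x3 ^ 2)) / (2 * (1 - c ^ 2)))
          * (1 - c ^ 2))
        * (1 - 2 * ((1 - x1 * (1 - c ^ 2) / (x1 * x2 - x3 ^ 2)) / (2 * (1 - c ^ 2)))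
          * (1 - c ^ 2))
        - ((x3 / (x1 * x2 - x3 ^ 2) - c / (1 - c ^ 2)) * (1 - c ^ 2) + c) ^ 2)
        / (1 - c ^ 2) = (1 - c ^ 2) / (x1 * x2 - x3 ^ 2) := by
    generalize hM : x1 * x2 - x3 ^ 2 = m at *
    field_simp; subst hM; ring
  have hPc : Pc c ((1 - x2 * (1 - c ^ 2) / (x1 * x2 - x3 ^ 2)) / (2 * (1 - c ^ 2)))
      ((1 - x1 * (1 - c ^ 2) / (x1 * x2 - x3 ^ 2)) / (2 * (1 - c ^ 2)))
      (x3 / (x1 * x2 - x3 ^ 2) - c / (1 - c ^ 2))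
      = -(1 / 2) * Real.log ((1 - c ^ 2) / (x1 * x2 - x3 ^ 2)) := by
    rw [Pc, harg]
  rw [hPc]
  have h1 : Real.log ((1 - c ^ 2) / (x1 * x2 - x3 ^ 2))
      = Real.log (1 - c ^ 2) - Real.log (x1 * x2 - x3 ^ 2) :=
    Real.log_div hs.ne' hm.ne'
  have h2 : Real.log (Real.sqrt (1 - c ^ 2) / Real.sqrt (x1 * x2 - x3 ^ 2))
      = Real.log (1 - c ^ 2) / 2 - Real.log (x1 * x2 - x3 ^ 2) / 2 := by
    rw [Real.log_div (by positivity) (by positivity), Real.log_sqrt hs.le,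
      Real.log_sqrt hm.le]
  have hlin : ((1 - x2 * (1 - c ^ 2) / (x1 * x2 - x3 ^ 2)) / (2 * (1 - c ^ 2))) * x1
      + ((1 - x1 * (1 - c ^ 2) / (x1 * x2 - x3 ^ 2)) / (2 * (1 - c ^ 2))) * x2
      + (x3 / (x1 * x2 - x3 ^ 2) - c / (1 - c ^ 2)) * x3
      = (x1 + x2 - 2 * c * x3) / (2 * (1 - c ^ 2)) - 1 := by
    generalize hM : x1 * x2 - x3 ^ 2 = m at *
    field_simp; subst hM; ring
  rw [h1, h2, hlin]; ring

/-- For `c ∈ (-1,1)` and `x = (x₁,x₂,x₃)` with `x₁ > 0`, `x₂ > 0`, `x₁ x₂ > x₃²`, the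
Legendre transform of `P_c` at `x`, i.e. `sup_{λ ∈ D_c} (⟨λ,x⟩ - P_c(λ))`, equals
`log(√(1-c²)/√(x₁x₂ - x₃²)) - 1 + (x₁ + x₂ - 2 c x₃)/(2(1-c²))`. -/
theorem legendre_transform_Pc_of_mem
    (c : ℝ) (hc : c ∈ Set.Ioo (-1 : ℝ) 1)
    (x1 x2 x3 : ℝ) (hx1 : 0 < x1) (hx2 : 0 < x2) (hx3 : x3 ^ 2 < x1 * x2) :
    (⨆ l ∈ {l : ℝ × ℝ × ℝ | Dc c l.1 l.2.1 l.2.2},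
        ((l.1 * x1 + l.2.1 * x2 + l.2.2 * x3 - Pc c l.1 l.2.1 l.2.2 : ℝ) : EReal))
      = ((Real.log (Real.sqrt (1 - c ^ 2) / Real.sqrt (x1 * x2 - x3 ^ 2)) - 1
          + (x1 + x2 - 2 * c * x3) / (2 * (1 - c ^ 2)) : ℝ) : EReal) := by
  obtain ⟨hc1, hc2⟩ := hc
  apply le_antisymm
  · refine iSup₂_le fun l hl => ?_
    have := upper_bound c x1 x2 x3 l.1 l.2.1 l.2.2 hc1 hc2 hx1 hx2 hx3 hl
    exact_mod_cast this
  · set L : ℝ × ℝ × ℝ :=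
      (((1 - x2 * (1 - c ^ 2) / (x1 * x2 - x3 ^ 2)) / (2 * (1 - c ^ 2))),
        ((1 - x1 * (1 - c ^ 2) / (x1 * x2 - x3 ^ 2)) / (2 * (1 - c ^ 2))),
        (x3 / (x1 * x2 - x3 ^ 2) - c / (1 - c ^ 2))) with hL
    have hmem : L ∈ {l : ℝ × ℝ × ℝ | Dc c l.1 l.2.1 l.2.2} :=
      attain_mem c x1 x2 x3 hc1 hc2 hx1 hx2 hx3
    have hval := attain_value c x1 x2 x3 hc1 hc2 hx1 hx2 hx3
    calc ((Real.log (Real.sqrt (1 - c ^ 2) / Real.sqrt (x1 * x2 - x3 ^ 2)) - 1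
          + (x1 + x2 - 2 * c * x3) / (2 * (1 - c ^ 2)) : ℝ) : EReal)
        = ((L.1 * x1 + L.2.1 * x2 + L.2.2 * x3 - Pc c L.1 L.2.1 L.2.2 : ℝ) : EReal) := by
          exact_mod_cast hval.symm
      _ ≤ _ := le_iSup₂ (f := fun (l : ℝ × ℝ × ℝ)
          (_ : l ∈ {l : ℝ × ℝ × ℝ | Dc c l.1 l.2.1 l.2.2}) =>
          ((l.1 * x1 + l.2.1 * x2 + l.2.2 * x3 - Pc c l.1 l.2.1 l.2.2 : ℝ) : EReal)) L hmem
end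
end

section
/- Let c ∈ (-1,1) and let x = (x1,x2,x3) ∈ ℝ³ be such that the conditions x1 > 0, x2 > 0 and x1·x2 > x3² do NOT all hold. Then the Legendre transform of P_c at x is infinite: sup_{λ ∈ D_c} ( λ1·x1 + λ2·x2 + λ3·x3 - P_c(λ) ) = +∞, in agreement with the convention P*_c(x) = +∞ outside the domain {x1 > 0, x2 > 0, x1·x2 > x3²}. -/
open MeasureTheory Real

noncomputable section

set_option maxHeartbeats 1000000

-- Case 1: x1 ≤ 0
lemma case1' (c : ℝ) (hc : c ∈ Set.Ioo (-1 : ℝ) 1) (x1 x2 x3 : ℝ) (hx1 : x1 ≤ 0) (M : ℝ) :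
    ∃ l : ℝ × ℝ × ℝ, Dc c l.1 l.2.1 l.2.2 ∧
      M < l.1 * x1 + l.2.1 * x2 + l.2.2 * x3 - Pc c l.1 l.2.1 l.2.2 := by
  obtain ⟨hc1, hc2⟩ := hc
  have hs : (0:ℝ) < 1 - c ^ 2 := by nlinarith
  set s := 1 - c ^ 2 with hs_def
  set t : ℝ := 1 + c ^ 2 + s * Real.exp (2 * M) with ht_def
  have hexp : 0 < Real.exp (2 * M) := Real.exp_pos _
  have ht1 : 1 ≤ t := by nlinarith
  refine ⟨((1 - t) / (2 * s), 0, 0), ⟨?_, ?_⟩, ?_⟩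
  · simp only
    have h1 : (1 - t) / (2 * s) ≤ 0 := div_nonpos_of_nonpos_of_nonneg (by linarith) (by linarith)
    have h2 : (0:ℝ) < 1 / (2 * s) := by positivity
    exact max_lt (lt_of_le_of_lt h1 h2) h2
  · simp only
    have ha : 1 - 2 * ((1 - t) / (2 * s)) * s = t := by field_simp; ring
    rw [ha]
    have hc2' : c ^ 2 < t := by nlinarith
    nlinarith
  · simp only
    have ha : 1 - 2 * ((1 - t) / (2 * s)) * s = t := by field_simp; ring
    have hPc : Pc c ((1 - t) / (2 * s)) 0 0 = -(1/2) * Real.log ((t - c^2) / s) := by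
      unfold Pc
      rw [← hs_def, ha]
      ring_nf
    rw [hPc]
    have hlog : 2 * M < Real.log ((t - c^2)/s) := by
      have harg : Real.exp (2*M) < (t - c^2)/s := by
        rw [lt_div_iff₀ hs]; nlinarith
      calc 2*M = Real.log (Real.exp (2*M)) := (Real.log_exp _).symm
        _ < _ := Real.log_lt_log hexp harg
    have hterm : 0 ≤ (1 - t) / (2 * s) * x1 := by
      have h1 : (1 - t) / (2 * s) ≤ 0 := div_nonpos_of_nonpos_of_nonneg (by linarith) (by linarith)
      nlinarith

    nlinarith


-- Case 2: x2 ≤ 0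
lemma case2' (c : ℝ) (hc : c ∈ Set.Ioo (-1 : ℝ) 1) (x1 x2 x3 : ℝ) (hx2 : x2 ≤ 0) (M : ℝ) :
    ∃ l : ℝ × ℝ × ℝ, Dc c l.1 l.2.1 l.2.2 ∧
      M < l.1 * x1 + l.2.1 * x2 + l.2.2 * x3 - Pc c l.1 l.2.1 l.2.2 := by
  obtain ⟨hc1, hc2⟩ := hc
  have hs : (0:ℝ) < 1 - c ^ 2 := by nlinarith
  set s := 1 - c ^ 2 with hs_def
  set t : ℝ := 1 + c ^ 2 + s * Real.exp (2 * M) with ht_def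
  have hexp : 0 < Real.exp (2 * M) := Real.exp_pos _
  have ht1 : 1 ≤ t := by nlinarith
  refine ⟨(0, (1 - t) / (2 * s), 0), ⟨?_, ?_⟩, ?_⟩
  · simp only
    have h1 : (1 - t) / (2 * s) ≤ 0 := div_nonpos_of_nonpos_of_nonneg (by linarith) (by linarith)
    have h2 : (0:ℝ) < 1 / (2 * s) := by positivity
    exact max_lt h2 (lt_of_le_of_lt h1 h2)
  · simp only
    have ha : 1 - 2 * ((1 - t) / (2 * s)) * s = t := by field_simp; ring
    rw [← hs_def, ha]
    have hc2' : c ^ 2 < t := by nlinarith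
    nlinarith
  · simp only
    have ha : 1 - 2 * ((1 - t) / (2 * s)) * s = t := by field_simp; ring
    have hPc : Pc c 0 ((1 - t) / (2 * s)) 0 = -(1/2) * Real.log ((t - c^2) / s) := by
      unfold Pc
      rw [← hs_def, ha]
      ring_nf
    rw [hPc]
    have hlog : 2 * M < Real.log ((t - c^2)/s) := by
      have harg : Real.exp (2*M) < (t - c^2)/s := by
        rw [lt_div_iff₀ hs]; nlinarith
      calc 2*M = Real.log (Real.exp (2*M)) := (Real.log_exp _).symm
        _ < _ := Real.log_lt_log hexp harg
    have hterm : 0 ≤ (1 - t) / (2 * s) * x2 := by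
      have h1 : (1 - t) / (2 * s) ≤ 0 := div_nonpos_of_nonpos_of_nonneg (by linarith) (by linarith)
      nlinarith
    nlinarith

-- Case 3: x1 > 0, x2 > 0, x1*x2 ≤ x3^2
lemma case3' (c : ℝ) (hc : c ∈ Set.Ioo (-1 : ℝ) 1) (x1 x2 x3 : ℝ)
    (hx1 : 0 < x1) (hx2 : 0 < x2) (hx3 : x1 * x2 ≤ x3 ^ 2) (M : ℝ) :
    ∃ l : ℝ × ℝ × ℝ, Dc c l.1 l.2.1 l.2.2 ∧
      M < l.1 * x1 + l.2.1 * x2 + l.2.2 * x3 - Pc c l.1 l.2.1 l.2.2 := by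
  obtain ⟨hc1, hc2⟩ := hc
  have hs : (0:ℝ) < 1 - c ^ 2 := by nlinarith
  set s := 1 - c ^ 2 with hs_def
  set m : ℝ := Real.sqrt (x1 * x2) with hm_def
  have hm2 : m ^ 2 = x1 * x2 := Real.sq_sqrt (by positivity)
  have hm : 0 < m := Real.sqrt_pos.mpr (by positivity)
  have habs : m ≤ |x3| := by nlinarith [abs_nonneg x3, sq_abs x3]
  set K : ℝ := (x1 + x2 - 2 * c * x3 - 2 * m) / (2 * s) with hK_def
  set t : ℝ := 1 + s * Real.exp (2 * (M - K)) with ht_def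
  have hexp : 0 < Real.exp (2 * (M - K)) := Real.exp_pos _
  have ht1 : 1 ≤ t := by nlinarith
  have ht0 : 0 < t := by linarith
  set r : ℝ := Real.sqrt (t ^ 2 - t) with hr_def
  have hr2 : r ^ 2 = t ^ 2 - t := Real.sq_sqrt (by nlinarith)
  have hr0 : 0 ≤ r := Real.sqrt_nonneg _
  have hrt : t - 1 ≤ r := by nlinarith
  set d : ℝ := if 0 ≤ x3 then r else -r with hd_def
  have hd2 : d ^ 2 = t ^ 2 - t := by rw [hd_def]; split_ifs <;> simpa using hr2
  have hdx3 : d * x3 = r * |x3| := by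
    rw [hd_def]; split_ifs with h
    · rw [abs_of_nonneg h]
    · rw [abs_of_neg (not_le.mp h)]; ring
  set a : ℝ := t * m / x1 with ha_def
  set b : ℝ := t * m / x2 with hb_def
  have ha_pos : 0 < a := by positivity
  have hb_pos : 0 < b := by positivity
  have hab : a * b = t ^ 2 := by
    rw [ha_def, hb_def]; field_simp; nlinarith
  have hax : a * x1 = t * m := by rw [ha_def]; field_simp
  have hbx : b * x2 = t * m := by rw [hb_def]; field_simp
  clear_value s m K t r d a b
  refine ⟨((1 - a) / (2 * s), (1 - b) / (2 * s), (d - c) / s), ⟨?_, ?_⟩, ?_⟩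
  · simp only
    rw [← hs_def]
    have h2 : (0:ℝ) < 2 * s := by linarith
    refine max_lt ?_ ?_ <;> rw [div_lt_div_iff_of_pos_right h2] <;> linarith
  · simp only
    have hA : 1 - 2 * ((1 - a) / (2 * s)) * s = a := by field_simp; ring
    have hB : 1 - 2 * ((1 - b) / (2 * s)) * s = b := by field_simp; ring
    have hD : (d - c) / s * s + c = d := by field_simp; ring
    rw [← hs_def, hA, hB, hD, hab, hd2]; linarith
  · simp only
    have hA : 1 - 2 * ((1 - a) / (2 * s)) * s = a := by field_simp; ring
    have hB : 1 - 2 * ((1 - b) / (2 * s)) * s = b := by field_simp; ring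
    have hD : (d - c) / s * s + c = d := by field_simp; ring
    have hPc : Pc c ((1 - a) / (2 * s)) ((1 - b) / (2 * s)) ((d - c) / s)
        = -(1/2) * Real.log (t / s) := by
      unfold Pc
      rw [← hs_def, hA, hB, hD, hab, hd2]
      ring_nf
    rw [hPc]
    have hlog : 2 * (M - K) < Real.log (t / s) := by
      have harg : Real.exp (2 * (M - K)) < t / s := by
        rw [lt_div_iff₀ hs]; nlinarith
      calc 2 * (M - K) = Real.log (Real.exp (2 * (M - K))) := (Real.log_exp _).symm
        _ < _ := Real.log_lt_log hexp harg
    have hnum : a * x1 + b * x2 - 2 * (d * x3) ≤ 2 * m := by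
      rw [hax, hbx, hdx3]; nlinarith
    have hval : (1 - a) / (2 * s) * x1 + (1 - b) / (2 * s) * x2 + (d - c) / s * x3
        = (x1 + x2 - 2 * c * x3 - (a * x1 + b * x2 - 2 * (d * x3))) / (2 * s) := by
      field_simp; ring
    rw [hval]
    have hK' : K ≤ (x1 + x2 - 2 * c * x3 - (a * x1 + b * x2 - 2 * (d * x3))) / (2 * s) := by
      rw [hK_def]; gcongr
    linarith

lemma key_lemma (c : ℝ) (hc : c ∈ Set.Ioo (-1 : ℝ) 1) (x1 x2 x3 : ℝ)
    (hx : ¬ (0 < x1 ∧ 0 < x2 ∧ x3 ^ 2 < x1 * x2)) (M : ℝ) :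
    ∃ l : ℝ × ℝ × ℝ, Dc c l.1 l.2.1 l.2.2 ∧
      M < l.1 * x1 + l.2.1 * x2 + l.2.2 * x3 - Pc c l.1 l.2.1 l.2.2 := by
  by_cases h1 : 0 < x1
  · by_cases h2 : 0 < x2
    · have h3 : x1 * x2 ≤ x3 ^ 2 := by
        by_contra h
        exact hx ⟨h1, h2, not_le.mp h⟩
      exact case3' c hc x1 x2 x3 h1 h2 h3 M
    · exact case2' c hc x1 x2 x3 (not_lt.mp h2) M
  · exact case1' c hc x1 x2 x3 (not_lt.mp h1) M

/-- For `c ∈ (-1,1)` and `x = (x₁,x₂,x₃)` such that the conditions `x₁ > 0`, `x₂ > 0`,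
`x₁ x₂ > x₃²` do not all hold, the Legendre transform of `P_c` at `x`, i.e.
`sup_{λ ∈ D_c} (⟨λ,x⟩ - P_c(λ))`, is `+∞`. -/
theorem legendre_transform_Pc_of_not_mem
    (c : ℝ) (hc : c ∈ Set.Ioo (-1 : ℝ) 1)
    (x1 x2 x3 : ℝ) (hx : ¬ (0 < x1 ∧ 0 < x2 ∧ x3 ^ 2 < x1 * x2)) :
    (⨆ l ∈ {l : ℝ × ℝ × ℝ | Dc c l.1 l.2.1 l.2.2},
        ((l.1 * x1 + l.2.1 * x2 + l.2.2 * x3 - Pc c l.1 l.2.1 l.2.2 : ℝ) : EReal))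
      = ⊤ := by
  rw [iSup₂_eq_top]
  intro b hb
  obtain ⟨M, hbM, _⟩ := EReal.exists_between_coe_real hb
  obtain ⟨l, hl, hval⟩ := key_lemma c hc x1 x2 x3 hx M
  exact ⟨l, hl, lt_trans hbM (by exact_mod_cast hval)⟩
end
end

section
/- Let s1 > 0, s2 > 0 and c ∈ (-1,1). Then for every x = (x1,x2,x3) ∈ ℝ³, the Legendre transform sup_{λ ∈ ℝ³, (λ1 s1², λ2 s2², λ3 s1 s2) ∈ D_c} ( λ1·x1 + λ2·x2 + λ3·x3 - P_c( λ1·s1², λ2·s2², λ3·s1·s2 ) ) equals P*_c( x1/s1², x2/s2², x3/(s1·s2) ), with both sides equal to +∞ whenever the conditions x1 > 0, x2 > 0, x1·x2 > x3² fail. In particular, the good rate function of the large deviation principle for the threshold realized (co-)volatility vector with constant volatilities σ1 = s1, σ2 = s2 and constant correlation ρ = c is I^𝒱_ldp(x1,x2,x3) = P*_c( x1/s1², x2/s2², x3/(s1·s2) ). -/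
set_option maxHeartbeats 1000000


open MeasureTheory Real
open scoped Classical

noncomputable section

/-- The Legendre transform `P*_c` of `P_c`, as an extended-real-valued function:
it is finite, with the explicit expression, exactly when `x₁ > 0`, `x₂ > 0` and
`x₁ x₂ > x₃²`, and equals `+∞` otherwise. -/
def PcStar (c x1 x2 x3 : ℝ) : EReal :=
  if 0 < x1 ∧ 0 < x2 ∧ x3 ^ 2 < x1 * x2 then
    ((Real.log (Real.sqrt (1 - c ^ 2) / Real.sqrt (x1 * x2 - x3 ^ 2)) - 1
        + (x1 + x2 - 2 * c * x3) / (2 * (1 - c ^ 2)) : ℝ) : EReal)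
  else ⊤

private lemma ereal_iSup_eq_top {ι : Sort*} (f : ι → EReal)
    (h : ∀ M : ℝ, ∃ i, (M : EReal) ≤ f i) : ⨆ i, f i = ⊤ := by
  rw [iSup_eq_top]
  intro b hb
  induction b with
  | bot =>
    obtain ⟨i, hi⟩ := h 0
    exact ⟨i, lt_of_lt_of_le (by simp) hi⟩
  | coe r =>
    obtain ⟨i, hi⟩ := h (r + 1)
    exact ⟨i, lt_of_lt_of_le (by exact_mod_cast lt_add_one r) hi⟩
  | top => exact absurd hb (lt_irrefl _)

private lemma lin_pos (y1 y2 y3 a b d : ℝ) (ha : 0 < a) (hb : 0 < b)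
    (hd : d ^ 2 < a * b) (hy1 : 0 < y1) (hy2 : 0 < y2) (hy : y3 ^ 2 < y1 * y2) :
    0 < a * y1 + b * y2 - 2 * d * y3 := by
  have h1 : d ^ 2 * y3 ^ 2 < (a * b) * (y1 * y2) :=
    mul_lt_mul'' hd hy (sq_nonneg d) (sq_nonneg y3)
  nlinarith [sq_nonneg (a * y1 - b * y2), add_pos (mul_pos ha hy1) (mul_pos hb hy2),
    sq_nonneg (a * y1 + b * y2 - 2 * d * y3)]

private lemma prod_le (y1 y2 y3 a b d : ℝ) (hy1 : 0 < y1) (hy2 : 0 < y2)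
    (hy : y3 ^ 2 < y1 * y2) :
    4 * ((a * b - d ^ 2) * (y1 * y2 - y3 ^ 2)) ≤ (a * y1 + b * y2 - 2 * d * y3) ^ 2 := by
  nlinarith [sq_nonneg (2 * y1 * y2 * d - y3 * (a * y1 + b * y2)),
    mul_nonneg (sq_nonneg (a * y1 - b * y2)) (le_of_lt (sub_pos.2 hy)),
    mul_pos hy1 hy2]

private lemma key_ineq (t y1 y2 y3 a b d : ℝ) (ht : 0 < t) (ha : 0 < a) (hb : 0 < b)
    (hd : d ^ 2 < a * b) (hy1 : 0 < y1) (hy2 : 0 < y2) (hy : y3 ^ 2 < y1 * y2) :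
    Real.log ((a * b - d ^ 2) / t) ≤
      Real.log t - Real.log (y1 * y2 - y3 ^ 2) - 2 + (a * y1 + b * y2 - 2 * d * y3) / t := by
  set L := a * y1 + b * y2 - 2 * d * y3 with hLdef
  have hL : 0 < L := lin_pos y1 y2 y3 a b d ha hb hd hy1 hy2 hy
  have hab : 0 < a * b - d ^ 2 := sub_pos.2 hd
  have hΔ : 0 < y1 * y2 - y3 ^ 2 := sub_pos.2 hy
  have hP : 0 < (a * b - d ^ 2) * (y1 * y2 - y3 ^ 2) := mul_pos hab hΔ
  have h1 : Real.log ((a * b - d ^ 2) * (y1 * y2 - y3 ^ 2)) ≤ Real.log ((L / 2) ^ 2) := by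
    apply Real.log_le_log hP
    nlinarith [prod_le y1 y2 y3 a b d hy1 hy2 hy]
  have h2 : Real.log ((L / 2) ^ 2) = 2 * Real.log (L / 2) := by
    rw [Real.log_pow]; push_cast; ring
  have h3 : Real.log (L / (2 * t)) ≤ L / (2 * t) - 1 :=
    Real.log_le_sub_one_of_pos (by positivity)
  have h4 : Real.log (L / (2 * t)) = Real.log (L / 2) - Real.log t := by
    rw [show L / (2 * t) = (L / 2) / t by ring, Real.log_div (by positivity) ht.ne']
  have h5 : Real.log ((a * b - d ^ 2) * (y1 * y2 - y3 ^ 2)) =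
      Real.log (a * b - d ^ 2) + Real.log (y1 * y2 - y3 ^ 2) :=
    Real.log_mul hab.ne' hΔ.ne'
  have h6 : Real.log ((a * b - d ^ 2) / t) = Real.log (a * b - d ^ 2) - Real.log t :=
    Real.log_div hab.ne' ht.ne'
  have h7 : L / t = 2 * (L / (2 * t)) := by ring
  linarith

private lemma sqrt_log_eq (t Δ : ℝ) (ht : 0 < t) (hΔ : 0 < Δ) :
    Real.log (Real.sqrt t / Real.sqrt Δ) = (1/2) * Real.log t - (1/2) * Real.log Δ := by
  rw [Real.log_div (Real.sqrt_ne_zero'.mpr ht) (Real.sqrt_ne_zero'.mpr hΔ),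
      Real.log_sqrt ht.le, Real.log_sqrt hΔ.le]
  ring

private lemma point_le (c y1 y2 y3 l1 l2 l3 : ℝ) (ht : 0 < 1 - c ^ 2)
    (hy1 : 0 < y1) (hy2 : 0 < y2) (hy : y3 ^ 2 < y1 * y2) (hD : Dc c l1 l2 l3) :
    l1 * y1 + l2 * y2 + l3 * y3 - Pc c l1 l2 l3 ≤
      Real.log (Real.sqrt (1 - c ^ 2) / Real.sqrt (y1 * y2 - y3 ^ 2)) - 1
        + (y1 + y2 - 2 * c * y3) / (2 * (1 - c ^ 2)) := by
  have hΔ : 0 < y1 * y2 - y3 ^ 2 := sub_pos.2 hy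
  obtain ⟨hmax, hdet⟩ := hD
  have ha : 0 < 1 - 2 * l1 * (1 - c ^ 2) := by
    have h1 : l1 < 1 / (2 * (1 - c ^ 2)) := lt_of_le_of_lt (le_max_left _ _) hmax
    have h2 := (lt_div_iff₀ (by positivity : (0:ℝ) < 2 * (1 - c ^ 2))).mp h1
    nlinarith
  have hb : 0 < 1 - 2 * l2 * (1 - c ^ 2) := by
    have h1 : l2 < 1 / (2 * (1 - c ^ 2)) := lt_of_le_of_lt (le_max_right _ _) hmax
    have h2 := (lt_div_iff₀ (by positivity : (0:ℝ) < 2 * (1 - c ^ 2))).mp h1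
    nlinarith
  have hkey := key_ineq (1 - c ^ 2) y1 y2 y3 (1 - 2 * l1 * (1 - c ^ 2))
    (1 - 2 * l2 * (1 - c ^ 2)) (l3 * (1 - c ^ 2) + c) ht ha hb hdet hy1 hy2 hy
  have hsq := sqrt_log_eq (1 - c ^ 2) (y1 * y2 - y3 ^ 2) ht hΔ
  have e1 : l1 * y1 + l2 * y2 + l3 * y3 = (y1 + y2 - 2 * c * y3) / (2 * (1 - c ^ 2))
      - (1/2) * (((1 - 2 * l1 * (1 - c ^ 2)) * y1 + (1 - 2 * l2 * (1 - c ^ 2)) * y2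
          - 2 * (l3 * (1 - c ^ 2) + c) * y3) / (1 - c ^ 2)) := by
    field_simp
    ring
  rw [Pc, hsq]
  linarith

private lemma opt_value (c y1 y2 y3 : ℝ) (ht : 0 < 1 - c ^ 2)
    (hy1 : 0 < y1) (hy2 : 0 < y2) (hy : y3 ^ 2 < y1 * y2) :
    ∃ l1 l2 l3 : ℝ, Dc c l1 l2 l3 ∧
      l1 * y1 + l2 * y2 + l3 * y3 - Pc c l1 l2 l3 =
        Real.log (Real.sqrt (1 - c ^ 2) / Real.sqrt (y1 * y2 - y3 ^ 2)) - 1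
          + (y1 + y2 - 2 * c * y3) / (2 * (1 - c ^ 2)) := by
  have hΔ : 0 < y1 * y2 - y3 ^ 2 := sub_pos.2 hy
  set Δ := y1 * y2 - y3 ^ 2 with hΔdef
  refine ⟨(1 - (1 - c ^ 2) * y2 / Δ) / (2 * (1 - c ^ 2)),
          (1 - (1 - c ^ 2) * y1 / Δ) / (2 * (1 - c ^ 2)),
          ((1 - c ^ 2) * y3 / Δ - c) / (1 - c ^ 2), ?_, ?_⟩
  · constructor
    · apply max_lt <;>
      · rw [div_lt_div_iff₀ (by positivity) (by positivity)]
        nlinarith [div_pos (mul_pos ht hy2) hΔ, div_pos (mul_pos ht hy1) hΔ, ht]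
    · have ea : 1 - 2 * ((1 - (1 - c ^ 2) * y2 / Δ) / (2 * (1 - c ^ 2))) * (1 - c ^ 2)
          = (1 - c ^ 2) * y2 / Δ := by field_simp; ring
      have eb : 1 - 2 * ((1 - (1 - c ^ 2) * y1 / Δ) / (2 * (1 - c ^ 2))) * (1 - c ^ 2)
          = (1 - c ^ 2) * y1 / Δ := by field_simp; ring
      have ed : ((1 - c ^ 2) * y3 / Δ - c) / (1 - c ^ 2) * (1 - c ^ 2) + c
          = (1 - c ^ 2) * y3 / Δ := by field_simp; ring
      rw [ea, eb, ed]
      rw [div_mul_div_comm, div_pow, div_lt_div_iff₀ (by positivity) (by positivity)]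
      nlinarith [mul_lt_mul_of_pos_right (mul_lt_mul_of_pos_left hy (mul_pos ht ht))
        (mul_pos hΔ hΔ), sq_nonneg Δ]
  · have ea : 1 - 2 * ((1 - (1 - c ^ 2) * y2 / Δ) / (2 * (1 - c ^ 2))) * (1 - c ^ 2)
        = (1 - c ^ 2) * y2 / Δ := by field_simp; ring
    have eb : 1 - 2 * ((1 - (1 - c ^ 2) * y1 / Δ) / (2 * (1 - c ^ 2))) * (1 - c ^ 2)
        = (1 - c ^ 2) * y1 / Δ := by field_simp; ring
    have ed : ((1 - c ^ 2) * y3 / Δ - c) / (1 - c ^ 2) * (1 - c ^ 2) + c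
        = (1 - c ^ 2) * y3 / Δ := by field_simp; ring
    have eArg : ((1 - c ^ 2) * y2 / Δ * ((1 - c ^ 2) * y1 / Δ) - ((1 - c ^ 2) * y3 / Δ) ^ 2)
        / (1 - c ^ 2) = (1 - c ^ 2) / Δ := by
      rw [hΔdef]
      field_simp
    have eLin : (1 - (1 - c ^ 2) * y2 / Δ) / (2 * (1 - c ^ 2)) * y1
        + (1 - (1 - c ^ 2) * y1 / Δ) / (2 * (1 - c ^ 2)) * y2
        + ((1 - c ^ 2) * y3 / Δ - c) / (1 - c ^ 2) * y3
        = (y1 + y2 - 2 * c * y3) / (2 * (1 - c ^ 2)) - 1 := by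
      rw [hΔdef]
      field_simp [(sub_pos.2 hy).ne']
      ring_nf
      field_simp [(sub_pos.2 hy).ne']
      ring
    rw [Pc, ea, eb, ed, eArg, eLin, Real.log_div ht.ne' hΔ.ne',
        sqrt_log_eq (1 - c ^ 2) Δ ht hΔ]
    ring

private lemma Dc_of (c A B D : ℝ) (ht : 0 < 1 - c ^ 2) (hA : 0 < A) (hB : 0 < B)
    (hD : D ^ 2 < A * B) :
    Dc c ((1 - A) / (2 * (1 - c ^ 2))) ((1 - B) / (2 * (1 - c ^ 2)))
      ((D - c) / (1 - c ^ 2)) := by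
  have eA : 1 - 2 * ((1 - A) / (2 * (1 - c ^ 2))) * (1 - c ^ 2) = A := by field_simp; ring
  have eB : 1 - 2 * ((1 - B) / (2 * (1 - c ^ 2))) * (1 - c ^ 2) = B := by field_simp; ring
  have eD : (D - c) / (1 - c ^ 2) * (1 - c ^ 2) + c = D := by field_simp; ring
  constructor
  · apply max_lt <;>
    · rw [div_lt_div_iff₀ (by positivity) (by positivity)]
      nlinarith
  · rw [eA, eB, eD]; exact hD

private lemma value_formula (c y1 y2 y3 A B D : ℝ) (ht : 0 < 1 - c ^ 2) :
    (1 - A) / (2 * (1 - c ^ 2)) * y1 + (1 - B) / (2 * (1 - c ^ 2)) * y2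
      + (D - c) / (1 - c ^ 2) * y3
      - Pc c ((1 - A) / (2 * (1 - c ^ 2))) ((1 - B) / (2 * (1 - c ^ 2)))
          ((D - c) / (1 - c ^ 2))
    = (y1 + y2 - 2 * c * y3) / (2 * (1 - c ^ 2))
      - (A * y1 + B * y2 - 2 * D * y3) / (2 * (1 - c ^ 2))
      + (1 / 2) * Real.log ((A * B - D ^ 2) / (1 - c ^ 2)) := by
  have eA : 1 - 2 * ((1 - A) / (2 * (1 - c ^ 2))) * (1 - c ^ 2) = A := by field_simp; ring
  have eB : 1 - 2 * ((1 - B) / (2 * (1 - c ^ 2))) * (1 - c ^ 2) = B := by field_simp; ring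
  have eD : (D - c) / (1 - c ^ 2) * (1 - c ^ 2) + c = D := by field_simp; ring
  rw [Pc, eA, eB, eD]
  have hlin : (1 - A) / (2 * (1 - c ^ 2)) * y1 + (1 - B) / (2 * (1 - c ^ 2)) * y2
      + (D - c) / (1 - c ^ 2) * y3
      = (y1 + y2 - 2 * c * y3) / (2 * (1 - c ^ 2))
        - (A * y1 + B * y2 - 2 * D * y3) / (2 * (1 - c ^ 2)) := by
    field_simp
    ring
  linarith [hlin]

private lemma top_case (c y1 y2 y3 : ℝ) (ht : 0 < 1 - c ^ 2)
    (h : ¬(0 < y1 ∧ 0 < y2 ∧ y3 ^ 2 < y1 * y2)) (M : ℝ) :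
    ∃ l1 l2 l3 : ℝ, Dc c l1 l2 l3 ∧
      M ≤ l1 * y1 + l2 * y2 + l3 * y3 - Pc c l1 l2 l3 := by
  by_cases hy1 : y1 ≤ 0
  · obtain ⟨n, hn⟩ := exists_nat_ge (Real.exp (2 * M))
    set A : ℝ := 1 + 2 * n * (1 - c ^ 2) with hA
    have hA0 : 0 < A := by positivity
    have hn0 : (0:ℝ) ≤ n := n.cast_nonneg
    refine ⟨(1 - A) / (2 * (1 - c ^ 2)), (1 - 1) / (2 * (1 - c ^ 2)),
        (c - c) / (1 - c ^ 2), Dc_of c A 1 c ht hA0 one_pos (by nlinarith), ?_⟩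
    rw [value_formula c y1 y2 y3 A 1 c ht]
    have e1 : (y1 + y2 - 2 * c * y3) / (2 * (1 - c ^ 2))
        - (A * y1 + 1 * y2 - 2 * c * y3) / (2 * (1 - c ^ 2)) = -(n : ℝ) * y1 := by
      rw [hA]; field_simp; ring
    have e2 : (A * 1 - c ^ 2) / (1 - c ^ 2) = 1 + 2 * n := by
      rw [hA]; field_simp; ring
    have e3 : 2 * M ≤ Real.log (1 + 2 * n) := by
      rw [← Real.log_exp (2 * M)]
      apply Real.log_le_log (Real.exp_pos _)
      linarith
    have e4 : 0 ≤ -(n : ℝ) * y1 := by nlinarith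
    rw [e1, e2]
    linarith
  · by_cases hy2 : y2 ≤ 0
    · obtain ⟨n, hn⟩ := exists_nat_ge (Real.exp (2 * M))
      set B : ℝ := 1 + 2 * n * (1 - c ^ 2) with hB
      have hB0 : 0 < B := by positivity
      have hn0 : (0:ℝ) ≤ n := n.cast_nonneg
      refine ⟨(1 - 1) / (2 * (1 - c ^ 2)), (1 - B) / (2 * (1 - c ^ 2)),
          (c - c) / (1 - c ^ 2), Dc_of c 1 B c ht one_pos hB0 (by nlinarith), ?_⟩
      rw [value_formula c y1 y2 y3 1 B c ht]
      have e1 : (y1 + y2 - 2 * c * y3) / (2 * (1 - c ^ 2))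
          - (1 * y1 + B * y2 - 2 * c * y3) / (2 * (1 - c ^ 2)) = -(n : ℝ) * y2 := by
        rw [hB]; field_simp; ring
      have e2 : (1 * B - c ^ 2) / (1 - c ^ 2) = 1 + 2 * n := by
        rw [hB]; field_simp; ring
      have e3 : 2 * M ≤ Real.log (1 + 2 * n) := by
        rw [← Real.log_exp (2 * M)]
        apply Real.log_le_log (Real.exp_pos _)
        linarith
      have e4 : 0 ≤ -(n : ℝ) * y2 := by nlinarith
      rw [e1, e2]
      linarith
    · push_neg at hy1 hy2
      have h3 : y1 * y2 ≤ y3 ^ 2 := by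
        by_contra h3
        push_neg at h3
        exact h ⟨hy1, hy2, h3⟩
      have hr1 : 0 < Real.sqrt y1 := Real.sqrt_pos.2 hy1
      have hr2 : 0 < Real.sqrt y2 := Real.sqrt_pos.2 hy2
      set r1 := Real.sqrt y1
      set r2 := Real.sqrt y2
      have hy1' : y1 = r1 ^ 2 := (Real.sq_sqrt hy1.le).symm
      have hy2' : y2 = r2 ^ 2 := (Real.sq_sqrt hy2.le).symm
      have hrr : r1 * r2 ≤ |y3| := by
        rw [← Real.sqrt_mul hy1.le y2, ← Real.sqrt_sq_eq_abs y3]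
        exact Real.sqrt_le_sqrt h3
      set K : ℝ := (y1 + y2 - 2 * c * y3) / (2 * (1 - c ^ 2)) - |y3| / (1 - c ^ 2)
        with hK
      obtain ⟨n, hn⟩ := exists_nat_ge ((1 - c ^ 2) * Real.exp (2 * (M - K)))
      have hn0 : (0:ℝ) ≤ n := n.cast_nonneg
      set e : ℝ := if 0 ≤ y3 then (1:ℝ) else -1 with he
      have he2 : e ^ 2 = 1 := by rw [he]; split_ifs <;> norm_num
      have hey : e * y3 = |y3| := by
        rw [he]; split_ifs with hsg
        · rw [one_mul, abs_of_nonneg hsg]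
        · rw [abs_of_neg (lt_of_not_ge hsg)]; ring
      set A : ℝ := ((n:ℝ) + 1) * r2 / r1 with hA
      set B : ℝ := ((n:ℝ) + 1) * r1 / r2 with hB
      set D : ℝ := e * (n:ℝ) with hD
      have hA0 : 0 < A := by rw [hA]; positivity
      have hB0 : 0 < B := by rw [hB]; positivity
      have hAB : A * B = ((n:ℝ) + 1) ^ 2 := by rw [hA, hB]; field_simp
      have hD2 : D ^ 2 = (n:ℝ) ^ 2 := by rw [hD, mul_pow, he2, one_mul]
      have hDlt : D ^ 2 < A * B := by rw [hD2, hAB]; nlinarith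
      refine ⟨(1 - A) / (2 * (1 - c ^ 2)), (1 - B) / (2 * (1 - c ^ 2)),
          (D - c) / (1 - c ^ 2), Dc_of c A B D ht hA0 hB0 hDlt, ?_⟩
      rw [value_formula c y1 y2 y3 A B D ht]
      have hAy1 : A * y1 = ((n:ℝ) + 1) * (r1 * r2) := by
        rw [hA, hy1']; field_simp
      have hBy2 : B * y2 = ((n:ℝ) + 1) * (r1 * r2) := by
        rw [hB, hy2']; field_simp
      have hDy3 : D * y3 = (n:ℝ) * |y3| := by
        rw [hD, show e * (n:ℝ) * y3 = (n:ℝ) * (e * y3) by ring, hey]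
      have hLle : A * y1 + B * y2 - 2 * D * y3 ≤ 2 * |y3| := by
        rw [show 2 * D * y3 = 2 * (D * y3) by ring, hAy1, hBy2, hDy3]
        nlinarith [hrr, hn0]
      have h5 : (A * y1 + B * y2 - 2 * D * y3) / (2 * (1 - c ^ 2)) ≤ |y3| / (1 - c ^ 2) := by
        have h5a : (A * y1 + B * y2 - 2 * D * y3) / (2 * (1 - c ^ 2))
            ≤ (2 * |y3|) / (2 * (1 - c ^ 2)) := by gcongr
        have h5b : (2 * |y3|) / (2 * (1 - c ^ 2)) = |y3| / (1 - c ^ 2) :=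
          mul_div_mul_left |y3| (1 - c ^ 2) two_ne_zero
        linarith
      have hArg : A * B - D ^ 2 = 2 * (n:ℝ) + 1 := by rw [hAB, hD2]; ring
      have hlog : 2 * (M - K) ≤ Real.log ((A * B - D ^ 2) / (1 - c ^ 2)) := by
        rw [hArg, ← Real.log_exp (2 * (M - K))]
        apply Real.log_le_log (Real.exp_pos _)
        rw [le_div_iff₀ ht]
        nlinarith [hn, hn0]
      linarith

private lemma core (c : ℝ) (hc : c ∈ Set.Ioo (-1 : ℝ) 1) (y1 y2 y3 : ℝ) :
    (⨆ m : ℝ × ℝ × ℝ, ⨆ _ : Dc c m.1 m.2.1 m.2.2,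
        ((m.1 * y1 + m.2.1 * y2 + m.2.2 * y3 - Pc c m.1 m.2.1 m.2.2 : ℝ) : EReal))
      = PcStar c y1 y2 y3 := by
  have ht : 0 < 1 - c ^ 2 := by nlinarith [hc.1, hc.2]
  by_cases h : 0 < y1 ∧ 0 < y2 ∧ y3 ^ 2 < y1 * y2
  · obtain ⟨hy1, hy2, hy⟩ := h
    rw [PcStar, if_pos ⟨hy1, hy2, hy⟩]
    apply le_antisymm
    · refine iSup_le fun m => iSup_le fun hm => ?_
      exact EReal.coe_le_coe_iff.mpr
        (point_le c y1 y2 y3 m.1 m.2.1 m.2.2 ht hy1 hy2 hy hm)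
    · obtain ⟨l1, l2, l3, hD, hval⟩ := opt_value c y1 y2 y3 ht hy1 hy2 hy
      have h1 : ((Real.log (Real.sqrt (1 - c ^ 2) / Real.sqrt (y1 * y2 - y3 ^ 2)) - 1
          + (y1 + y2 - 2 * c * y3) / (2 * (1 - c ^ 2)) : ℝ) : EReal)
          = ((l1 * y1 + l2 * y2 + l3 * y3 - Pc c l1 l2 l3 : ℝ) : EReal) := by
        rw [hval]
      rw [h1]
      refine le_trans (le_iSup (fun _ : Dc c l1 l2 l3 =>
          ((l1 * y1 + l2 * y2 + l3 * y3 - Pc c l1 l2 l3 : ℝ) : EReal)) hD) ?_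
      exact le_iSup (fun m : ℝ × ℝ × ℝ => ⨆ _ : Dc c m.1 m.2.1 m.2.2,
          ((m.1 * y1 + m.2.1 * y2 + m.2.2 * y3 - Pc c m.1 m.2.1 m.2.2 : ℝ) : EReal))
        (l1, l2, l3)
  · rw [PcStar, if_neg h]
    apply ereal_iSup_eq_top
    intro M
    obtain ⟨l1, l2, l3, hD, hval⟩ := top_case c y1 y2 y3 ht h M
    refine ⟨(l1, l2, l3), ?_⟩
    refine le_trans (EReal.coe_le_coe_iff.mpr hval) ?_
    exact le_iSup (fun _ : Dc c l1 l2 l3 =>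
      ((l1 * y1 + l2 * y2 + l3 * y3 - Pc c l1 l2 l3 : ℝ) : EReal)) hD

/-- For constant volatilities `s₁, s₂ > 0` and constant correlation `c ∈ (-1,1)`, the
Legendre transform `sup_{λ : (λ₁ s₁², λ₂ s₂², λ₃ s₁ s₂) ∈ D_c} (⟨λ,x⟩ - P_c(λ₁ s₁², λ₂ s₂², λ₃ s₁ s₂))`
equals `P*_c(x₁/s₁², x₂/s₂², x₃/(s₁ s₂))`, both sides being `+∞` whenever the conditions
`x₁ > 0`, `x₂ > 0`, `x₁ x₂ > x₃²` fail. This is the good rate function `I^𝒱_ldp` of the LDP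
for the threshold realized (co-)volatility vector in the constant-coefficient case. -/
theorem legendre_transform_constant_coefficients
    (c s1 s2 : ℝ) (hs1 : 0 < s1) (hs2 : 0 < s2) (hc : c ∈ Set.Ioo (-1 : ℝ) 1)
    (x1 x2 x3 : ℝ) :
    (⨆ l ∈ {l : ℝ × ℝ × ℝ | Dc c (l.1 * s1 ^ 2) (l.2.1 * s2 ^ 2) (l.2.2 * (s1 * s2))},
        ((l.1 * x1 + l.2.1 * x2 + l.2.2 * x3
            - Pc c (l.1 * s1 ^ 2) (l.2.1 * s2 ^ 2) (l.2.2 * (s1 * s2)) : ℝ) : EReal))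
      = PcStar c (x1 / s1 ^ 2) (x2 / s2 ^ 2) (x3 / (s1 * s2)) ∧
    (¬ (0 < x1 ∧ 0 < x2 ∧ x3 ^ 2 < x1 * x2) →
      (⨆ l ∈ {l : ℝ × ℝ × ℝ | Dc c (l.1 * s1 ^ 2) (l.2.1 * s2 ^ 2) (l.2.2 * (s1 * s2))},
          ((l.1 * x1 + l.2.1 * x2 + l.2.2 * x3
              - Pc c (l.1 * s1 ^ 2) (l.2.1 * s2 ^ 2) (l.2.2 * (s1 * s2)) : ℝ) : EReal))
        = ⊤) := by
  have hs1' : s1 ^ 2 ≠ 0 := by positivity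
  have hs2' : s2 ^ 2 ≠ 0 := by positivity
  have hs12 : s1 * s2 ≠ 0 := by positivity
  have htrans :
      (⨆ l ∈ {l : ℝ × ℝ × ℝ | Dc c (l.1 * s1 ^ 2) (l.2.1 * s2 ^ 2) (l.2.2 * (s1 * s2))},
        ((l.1 * x1 + l.2.1 * x2 + l.2.2 * x3
            - Pc c (l.1 * s1 ^ 2) (l.2.1 * s2 ^ 2) (l.2.2 * (s1 * s2)) : ℝ) : EReal))
      = ⨆ m : ℝ × ℝ × ℝ, ⨆ _ : Dc c m.1 m.2.1 m.2.2,
          ((m.1 * (x1 / s1 ^ 2) + m.2.1 * (x2 / s2 ^ 2) + m.2.2 * (x3 / (s1 * s2))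
            - Pc c m.1 m.2.1 m.2.2 : ℝ) : EReal) := by
    apply le_antisymm
    · refine iSup_le fun l => iSup_le fun hl => ?_
      have hval : l.1 * x1 + l.2.1 * x2 + l.2.2 * x3
            - Pc c (l.1 * s1 ^ 2) (l.2.1 * s2 ^ 2) (l.2.2 * (s1 * s2))
          = (l.1 * s1 ^ 2) * (x1 / s1 ^ 2) + (l.2.1 * s2 ^ 2) * (x2 / s2 ^ 2)
            + (l.2.2 * (s1 * s2)) * (x3 / (s1 * s2))
            - Pc c (l.1 * s1 ^ 2) (l.2.1 * s2 ^ 2) (l.2.2 * (s1 * s2)) := by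
        field_simp
      rw [show ((l.1 * x1 + l.2.1 * x2 + l.2.2 * x3
            - Pc c (l.1 * s1 ^ 2) (l.2.1 * s2 ^ 2) (l.2.2 * (s1 * s2)) : ℝ) : EReal)
          = (((l.1 * s1 ^ 2) * (x1 / s1 ^ 2) + (l.2.1 * s2 ^ 2) * (x2 / s2 ^ 2)
            + (l.2.2 * (s1 * s2)) * (x3 / (s1 * s2))
            - Pc c (l.1 * s1 ^ 2) (l.2.1 * s2 ^ 2) (l.2.2 * (s1 * s2)) : ℝ) : EReal)
        from congrArg _ hval]
      refine le_trans (le_iSup (fun _ : Dc c (l.1 * s1 ^ 2) (l.2.1 * s2 ^ 2)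
          (l.2.2 * (s1 * s2)) =>
          (((l.1 * s1 ^ 2) * (x1 / s1 ^ 2) + (l.2.1 * s2 ^ 2) * (x2 / s2 ^ 2)
            + (l.2.2 * (s1 * s2)) * (x3 / (s1 * s2))
            - Pc c (l.1 * s1 ^ 2) (l.2.1 * s2 ^ 2) (l.2.2 * (s1 * s2)) : ℝ) : EReal)) hl) ?_
      exact le_iSup (fun m : ℝ × ℝ × ℝ => ⨆ _ : Dc c m.1 m.2.1 m.2.2,
          ((m.1 * (x1 / s1 ^ 2) + m.2.1 * (x2 / s2 ^ 2) + m.2.2 * (x3 / (s1 * s2))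
            - Pc c m.1 m.2.1 m.2.2 : ℝ) : EReal))
        (l.1 * s1 ^ 2, l.2.1 * s2 ^ 2, l.2.2 * (s1 * s2))
    · refine iSup_le fun m => iSup_le fun hm => ?_
      have h1 : m.1 / s1 ^ 2 * s1 ^ 2 = m.1 := div_mul_cancel₀ _ hs1'
      have h2 : m.2.1 / s2 ^ 2 * s2 ^ 2 = m.2.1 := div_mul_cancel₀ _ hs2'
      have h3 : m.2.2 / (s1 * s2) * (s1 * s2) = m.2.2 := div_mul_cancel₀ _ hs12
      have hmem : (m.1 / s1 ^ 2, m.2.1 / s2 ^ 2, m.2.2 / (s1 * s2)) ∈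
          {l : ℝ × ℝ × ℝ | Dc c (l.1 * s1 ^ 2) (l.2.1 * s2 ^ 2) (l.2.2 * (s1 * s2))} := by
        show Dc c (m.1 / s1 ^ 2 * s1 ^ 2) (m.2.1 / s2 ^ 2 * s2 ^ 2)
          (m.2.2 / (s1 * s2) * (s1 * s2))
        rw [h1, h2, h3]
        exact hm
      have hval : m.1 * (x1 / s1 ^ 2) + m.2.1 * (x2 / s2 ^ 2) + m.2.2 * (x3 / (s1 * s2))
            - Pc c m.1 m.2.1 m.2.2
          = m.1 / s1 ^ 2 * x1 + m.2.1 / s2 ^ 2 * x2 + m.2.2 / (s1 * s2) * x3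
            - Pc c (m.1 / s1 ^ 2 * s1 ^ 2) (m.2.1 / s2 ^ 2 * s2 ^ 2)
              (m.2.2 / (s1 * s2) * (s1 * s2)) := by
        rw [h1, h2, h3]
        ring
      rw [show ((m.1 * (x1 / s1 ^ 2) + m.2.1 * (x2 / s2 ^ 2) + m.2.2 * (x3 / (s1 * s2))
            - Pc c m.1 m.2.1 m.2.2 : ℝ) : EReal)
          = ((m.1 / s1 ^ 2 * x1 + m.2.1 / s2 ^ 2 * x2 + m.2.2 / (s1 * s2) * x3
            - Pc c (m.1 / s1 ^ 2 * s1 ^ 2) (m.2.1 / s2 ^ 2 * s2 ^ 2)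
              (m.2.2 / (s1 * s2) * (s1 * s2)) : ℝ) : EReal)
        from congrArg _ hval]
      refine le_trans (le_iSup (fun _ : (m.1 / s1 ^ 2, m.2.1 / s2 ^ 2, m.2.2 / (s1 * s2)) ∈
          {l : ℝ × ℝ × ℝ | Dc c (l.1 * s1 ^ 2) (l.2.1 * s2 ^ 2) (l.2.2 * (s1 * s2))} =>
          ((m.1 / s1 ^ 2 * x1 + m.2.1 / s2 ^ 2 * x2 + m.2.2 / (s1 * s2) * x3
            - Pc c (m.1 / s1 ^ 2 * s1 ^ 2) (m.2.1 / s2 ^ 2 * s2 ^ 2)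
              (m.2.2 / (s1 * s2) * (s1 * s2)) : ℝ) : EReal)) hmem) ?_
      exact le_iSup (fun l : ℝ × ℝ × ℝ => ⨆ _ : l ∈
          {l : ℝ × ℝ × ℝ | Dc c (l.1 * s1 ^ 2) (l.2.1 * s2 ^ 2) (l.2.2 * (s1 * s2))},
          ((l.1 * x1 + l.2.1 * x2 + l.2.2 * x3
            - Pc c (l.1 * s1 ^ 2) (l.2.1 * s2 ^ 2) (l.2.2 * (s1 * s2)) : ℝ) : EReal))
        (m.1 / s1 ^ 2, m.2.1 / s2 ^ 2, m.2.2 / (s1 * s2))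
  constructor
  · rw [htrans]
    exact core c hc (x1 / s1 ^ 2) (x2 / s2 ^ 2) (x3 / (s1 * s2))
  · intro hx
    have hnc : ¬(0 < x1 / s1 ^ 2 ∧ 0 < x2 / s2 ^ 2 ∧
        (x3 / (s1 * s2)) ^ 2 < x1 / s1 ^ 2 * (x2 / s2 ^ 2)) := by
      rintro ⟨h1, h2, h3⟩
      refine hx ⟨?_, ?_, ?_⟩
      · have := mul_pos h1 (pow_pos hs1 2)
        rwa [div_mul_cancel₀ _ hs1'] at this
      · have := mul_pos h2 (pow_pos hs2 2)
        rwa [div_mul_cancel₀ _ hs2'] at this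
      · have e1 : (x3 / (s1 * s2)) ^ 2 * (s1 * s2) ^ 2 = x3 ^ 2 := by
          field_simp
        have e2 : x1 / s1 ^ 2 * (x2 / s2 ^ 2) * (s1 * s2) ^ 2 = x1 * x2 := by
          rw [show (s1 * s2) ^ 2 = s1 ^ 2 * s2 ^ 2 by ring]
          field_simp
        have h4 := mul_lt_mul_of_pos_right h3 (by positivity : (0:ℝ) < (s1 * s2) ^ 2)
        rwa [e1, e2] at h4
    rw [htrans, core c hc (x1 / s1 ^ 2) (x2 / s2 ^ 2) (x3 / (s1 * s2)), PcStar,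
      if_neg hnc]
end
end
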